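/- Let $\mu$ be a finite symmetric nonnegative Borel measure on $\mathbb{R}^d$ and $\mathcal{B}[\phi,\psi](x)=\frac{1}{2}\int_{\mathbb{R}^d}(\phi(x+z)-\phi(x))(\psi(x+z)-\psi(x))\,d\mu(z)$. If $\phi,\psi,\varphi\in L^\infty(\mathbb{R}^d)$ and at least one of them has compact support, then $\int_{\mathbb{R}^d}\mathcal{B}[\phi,\psi\varphi]\,dx = \int_{\mathbb{R}^d}\mathcal{B}[\phi,\psi]\,\varphi\,dx + \int_{\mathbb{R}^d}\mathcal{B}[\phi,\varphi]\,\psi\,dx$. -/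

import Mathlib

open MeasureTheory Filter Topology
open scoped ENNReal NNReal

namespace Stmt5Aux

abbrev Ed (d : ℕ) := EuclideanSpace ℝ (Fin d)

private lemma abs_mul_le' {a b A B : ℝ} (ha : |a| ≤ A) (hb : |b| ≤ B) : |a * b| ≤ A * B := by
  rw [abs_mul]
  exact mul_le_mul ha hb (abs_nonneg _) ((abs_nonneg a).trans ha)

private lemma abs_sub_le2 {a b A : ℝ} (ha : |a| ≤ A) (hb : |b| ≤ A) : |a - b| ≤ 2 * A := by
  have h : |a - b| ≤ |a| + |b| := by
    simpa [sub_eq_add_neg, abs_neg] using abs_add_le a (-b)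
  linarith

/-- From a compactly supported function, build a `{0,1}`-valued integrable "bump". -/
private lemma mk_u {d : ℕ} {f : Ed d → ℝ} (hf : HasCompactSupport f) :
    ∃ u : Ed d → ℝ, Measurable u ∧ Integrable u volume ∧ (∀ x, u x = 0 ∨ u x = 1) ∧
      ∀ x, u x = 0 → f x = 0 := by
  classical
  refine ⟨(tsupport f).indicator (fun _ => (1:ℝ)), ?_, ?_, ?_, ?_⟩
  · exact measurable_const.indicator (isClosed_tsupport f).measurableSet
  · rw [integrable_indicator_iff (isClosed_tsupport f).measurableSet]
    exact integrableOn_const hf.measure_lt_top.ne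
  · intro x
    by_cases hx : x ∈ tsupport f <;> simp [Set.indicator, hx]
  · intro x hx
    by_cases hm : x ∈ tsupport f
    · simp [Set.indicator, hm] at hx
    · exact by_contra fun h => hm (subset_tsupport f h)

/-- Joint integrability on the product measure from a bump domination. -/
private lemma keyInt {d : ℕ} {μ : Measure (Ed d)} [IsFiniteMeasure μ]
    {F : Ed d × Ed d → ℝ} (hFm : Measurable F)
    {u : Ed d → ℝ} (hum : Measurable u) (hui : Integrable u volume)
    (hu01 : ∀ x, u x = 0 ∨ u x = 1)
    {M : ℝ} (hM0 : 0 ≤ M) (hbd : ∀ p, |F p| ≤ M)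
    (hvan : ∀ p : Ed d × Ed d, u p.1 = 0 → u (p.1 + p.2) = 0 → F p = 0) :
    Integrable F ((volume : Measure (Ed d)).prod μ) := by
  have hu0 : ∀ x, 0 ≤ u x := by
    intro x; rcases hu01 x with h | h <;> rw [h] <;> norm_num
  have hGm : Measurable fun p : Ed d × Ed d => u p.1 + u (p.1 + p.2) :=
    (hum.comp measurable_fst).add (hum.comp (measurable_fst.add measurable_snd))
  have hGint : Integrable (fun p : Ed d × Ed d => u p.1 + u (p.1 + p.2))
      ((volume : Measure (Ed d)).prod μ) := by
    rw [integrable_prod_iff' hGm.aestronglyMeasurable]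
    constructor
    · exact Eventually.of_forall fun z => hui.add (hui.comp_add_right z)
    · have hconst : (fun z : Ed d => ∫ x, ‖u x + u (x + z)‖) =
          fun _ => (∫ x, u x) + ∫ x, u x := by
        funext z
        have h1 : ∀ x : Ed d, ‖u x + u (x + z)‖ = u x + u (x + z) := fun x =>
          Real.norm_of_nonneg (add_nonneg (hu0 x) (hu0 _))
        simp only [h1]
        rw [integral_add hui (hui.comp_add_right z), integral_add_right_eq_self u z]
      rw [hconst]
      exact integrable_const _
  refine (hGint.const_mul M).mono' hFm.aestronglyMeasurable (Eventually.of_forall fun p => ?_)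
  rw [Real.norm_eq_abs]
  rcases hu01 p.1 with h1 | h1
  · rcases hu01 (p.1 + p.2) with h2 | h2
    · rw [hvan p h1 h2]; simp [h1, h2]
    · calc |F p| ≤ M := hbd p
        _ ≤ M * (u p.1 + u (p.1 + p.2)) := by
          rw [h1, h2]; nlinarith
  · calc |F p| ≤ M := hbd p
      _ ≤ M * (u p.1 + u (p.1 + p.2)) := by nlinarith [hu0 (p.1 + p.2), hu0 p.1, h1]

/-- The iterated integral of an "antisymmetric" kernel vanishes. -/
private lemma keyZero {d : ℕ} {μ : Measure (Ed d)} [IsFiniteMeasure μ]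
    (hsym : μ.map (fun z => -z) = μ)
    {F : Ed d × Ed d → ℝ}
    (hFi : Integrable F ((volume : Measure (Ed d)).prod μ))
    (hanti : ∀ x z : Ed d, F (x + z, -z) = - F (x, z)) :
    ∫ x, ∫ z, F (x, z) ∂μ = 0 := by
  have hswap : ∫ x, ∫ z, F (x, z) ∂μ = ∫ z, ∫ x, F (x, z) ∂(volume : Measure (Ed d)) ∂μ :=
    integral_integral_swap (by exact hFi)
  have hJ : ∀ z : Ed d, (∫ x, F (x, -z)) = - ∫ x, F (x, z) := by
    intro z
    have h1 : (∫ x, F (x, -z)) = ∫ x, F (x + z, -z) :=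
      (integral_add_right_eq_self (fun x => F (x, -z)) z).symm
    rw [h1]
    simp only [hanti]
    exact integral_neg _
  have h2 : ∫ z, (∫ x, F (x, z)) ∂μ = ∫ z, (∫ x, F (x, -z)) ∂μ := by
    conv_lhs => rw [← hsym]
    exact integral_map_equiv (MeasurableEquiv.neg (Ed d)) _
  have h3 : ∫ z, (∫ x, F (x, z)) ∂μ = - ∫ z, (∫ x, F (x, z)) ∂μ := by
    conv_lhs => rw [h2]
    simp only [hJ]
    exact integral_neg _
  rw [hswap]
  linarith

end Stmt5Aux

open Stmt5Aux

/-- Product rule for the bilinear operator of a zero-order Lévy operator: for a finite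
symmetric nonnegative measure `μ` and bounded measurable `φ, ψ, χ`, one of which has
compact support, `∫ 𝓑[φ, ψχ] dx = ∫ 𝓑[φ,ψ] χ dx + ∫ 𝓑[φ,χ] ψ dx`. -/
theorem stmt5 (d : ℕ) (μ : Measure (EuclideanSpace ℝ (Fin d))) [IsFiniteMeasure μ]
    (hsym : μ.map (fun z => -z) = μ)
    (φ ψ χ : EuclideanSpace ℝ (Fin d) → ℝ)
    (hφm : Measurable φ) (hψm : Measurable ψ) (hχm : Measurable χ)
    (Cφ Cψ Cχ : ℝ) (hφb : ∀ x, |φ x| ≤ Cφ) (hψb : ∀ x, |ψ x| ≤ Cψ) (hχb : ∀ x, |χ x| ≤ Cχ)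
    (hcs : HasCompactSupport φ ∨ HasCompactSupport ψ ∨ HasCompactSupport χ) :
    ∫ x, (1 / 2) * ∫ z, (φ (x + z) - φ x) * (ψ (x + z) * χ (x + z) - ψ x * χ x) ∂μ
      = (∫ x, ((1 / 2) * ∫ z, (φ (x + z) - φ x) * (ψ (x + z) - ψ x) ∂μ) * χ x)
        + ∫ x, ((1 / 2) * ∫ z, (φ (x + z) - φ x) * (χ (x + z) - χ x) ∂μ) * ψ x := by
  classical
  have hCφ : 0 ≤ Cφ := (abs_nonneg _).trans (hφb 0)
  have hCψ : 0 ≤ Cψ := (abs_nonneg _).trans (hψb 0)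
  have hCχ : 0 ≤ Cχ := (abs_nonneg _).trans (hχb 0)
  -- the four kernels
  set F₀ : Ed d × Ed d → ℝ := fun p =>
    (φ (p.1 + p.2) - φ p.1) * (ψ (p.1 + p.2) * χ (p.1 + p.2) - ψ p.1 * χ p.1) with hF₀def
  set F₁ : Ed d × Ed d → ℝ := fun p =>
    (φ (p.1 + p.2) - φ p.1) * (ψ (p.1 + p.2) - ψ p.1) * χ p.1 with hF₁def
  set F₂ : Ed d × Ed d → ℝ := fun p =>
    (φ (p.1 + p.2) - φ p.1) * (χ (p.1 + p.2) - χ p.1) * ψ p.1 with hF₂def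
  set F₃ : Ed d × Ed d → ℝ := fun p =>
    (φ (p.1 + p.2) - φ p.1) * (ψ (p.1 + p.2) - ψ p.1) * (χ (p.1 + p.2) - χ p.1) with hF₃def
  -- measurability
  have hadd : Measurable fun p : Ed d × Ed d => p.1 + p.2 := measurable_fst.add measurable_snd
  have hφ1 : Measurable fun p : Ed d × Ed d => φ p.1 := hφm.comp measurable_fst
  have hψ1 : Measurable fun p : Ed d × Ed d => ψ p.1 := hψm.comp measurable_fst
  have hχ1 : Measurable fun p : Ed d × Ed d => χ p.1 := hχm.comp measurable_fst
  have hφ2 : Measurable fun p : Ed d × Ed d => φ (p.1 + p.2) := hφm.comp hadd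
  have hψ2 : Measurable fun p : Ed d × Ed d => ψ (p.1 + p.2) := hψm.comp hadd
  have hχ2 : Measurable fun p : Ed d × Ed d => χ (p.1 + p.2) := hχm.comp hadd
  have hF₀m : Measurable F₀ := (hφ2.sub hφ1).mul ((hψ2.mul hχ2).sub (hψ1.mul hχ1))
  have hF₁m : Measurable F₁ := ((hφ2.sub hφ1).mul (hψ2.sub hψ1)).mul hχ1
  have hF₂m : Measurable F₂ := ((hφ2.sub hφ1).mul (hχ2.sub hχ1)).mul hψ1
  have hF₃m : Measurable F₃ := ((hφ2.sub hφ1).mul (hψ2.sub hψ1)).mul (hχ2.sub hχ1)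
  -- uniform bound
  set M : ℝ := 8 * (Cφ * (Cψ * Cχ)) with hMdef
  have hM0 : 0 ≤ M := by positivity
  have hΔφ : ∀ p : Ed d × Ed d, |φ (p.1 + p.2) - φ p.1| ≤ 2 * Cφ := fun p =>
    abs_sub_le2 (hφb _) (hφb _)
  have hΔψ : ∀ p : Ed d × Ed d, |ψ (p.1 + p.2) - ψ p.1| ≤ 2 * Cψ := fun p =>
    abs_sub_le2 (hψb _) (hψb _)
  have hΔχ : ∀ p : Ed d × Ed d, |χ (p.1 + p.2) - χ p.1| ≤ 2 * Cχ := fun p =>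
    abs_sub_le2 (hχb _) (hχb _)
  have hbd₀ : ∀ p, |F₀ p| ≤ M := by
    intro p
    have h := abs_mul_le' (hΔφ p)
      (abs_sub_le2 (abs_mul_le' (hψb (p.1 + p.2)) (hχb (p.1 + p.2)))
        (abs_mul_le' (hψb p.1) (hχb p.1)))
    rw [hMdef]; nlinarith [mul_nonneg hCψ hCχ, mul_nonneg hCφ (mul_nonneg hCψ hCχ)]
  have hbd₁ : ∀ p, |F₁ p| ≤ M := by
    intro p
    have h := abs_mul_le' (abs_mul_le' (hΔφ p) (hΔψ p)) (hχb p.1)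
    rw [hMdef]; nlinarith [mul_nonneg hCφ (mul_nonneg hCψ hCχ)]
  have hbd₂ : ∀ p, |F₂ p| ≤ M := by
    intro p
    have h := abs_mul_le' (abs_mul_le' (hΔφ p) (hΔχ p)) (hψb p.1)
    rw [hMdef]; nlinarith [mul_nonneg hCφ (mul_nonneg hCψ hCχ)]
  have hbd₃ : ∀ p, |F₃ p| ≤ M := by
    intro p
    have h := abs_mul_le' (abs_mul_le' (hΔφ p) (hΔψ p)) (hΔχ p)
    rw [hMdef]; nlinarith [mul_nonneg hCφ (mul_nonneg hCψ hCχ)]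
  -- the bump
  obtain ⟨u, hum, hui, hu01, hvan⟩ :
      ∃ u : Ed d → ℝ, Measurable u ∧ Integrable u volume ∧ (∀ x, u x = 0 ∨ u x = 1) ∧
        ∀ x z : Ed d, u x = 0 → u (x + z) = 0 →
          (φ x = 0 ∧ φ (x + z) = 0) ∨ (ψ x = 0 ∧ ψ (x + z) = 0) ∨
            (χ x = 0 ∧ χ (x + z) = 0) := by
    rcases hcs with h | h | h
    · obtain ⟨u, h1, h2, h3, h4⟩ := mk_u h
      exact ⟨u, h1, h2, h3, fun x z hx hz => Or.inl ⟨h4 x hx, h4 _ hz⟩⟩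
    · obtain ⟨u, h1, h2, h3, h4⟩ := mk_u h
      exact ⟨u, h1, h2, h3, fun x z hx hz => Or.inr (Or.inl ⟨h4 x hx, h4 _ hz⟩)⟩
    · obtain ⟨u, h1, h2, h3, h4⟩ := mk_u h
      exact ⟨u, h1, h2, h3, fun x z hx hz => Or.inr (Or.inr ⟨h4 x hx, h4 _ hz⟩)⟩
  -- vanishing of the kernels away from the bump
  have hvan₀ : ∀ p : Ed d × Ed d, u p.1 = 0 → u (p.1 + p.2) = 0 → F₀ p = 0 := by
    intro p h1 h2
    rcases hvan p.1 p.2 h1 h2 with ⟨a, b⟩ | ⟨a, b⟩ | ⟨a, b⟩ <;>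
      simp only [hF₀def, a, b] <;> ring
  have hvan₁ : ∀ p : Ed d × Ed d, u p.1 = 0 → u (p.1 + p.2) = 0 → F₁ p = 0 := by
    intro p h1 h2
    rcases hvan p.1 p.2 h1 h2 with ⟨a, b⟩ | ⟨a, b⟩ | ⟨a, b⟩ <;>
      simp only [hF₁def, a, b] <;> ring
  have hvan₂ : ∀ p : Ed d × Ed d, u p.1 = 0 → u (p.1 + p.2) = 0 → F₂ p = 0 := by
    intro p h1 h2
    rcases hvan p.1 p.2 h1 h2 with ⟨a, b⟩ | ⟨a, b⟩ | ⟨a, b⟩ <;>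
      simp only [hF₂def, a, b] <;> ring
  have hvan₃ : ∀ p : Ed d × Ed d, u p.1 = 0 → u (p.1 + p.2) = 0 → F₃ p = 0 := by
    intro p h1 h2
    rcases hvan p.1 p.2 h1 h2 with ⟨a, b⟩ | ⟨a, b⟩ | ⟨a, b⟩ <;>
      simp only [hF₃def, a, b] <;> ring
  -- joint integrability
  have hint₀ : Integrable F₀ ((volume : Measure (Ed d)).prod μ) :=
    keyInt hF₀m hum hui hu01 hM0 hbd₀ hvan₀
  have hint₁ : Integrable F₁ ((volume : Measure (Ed d)).prod μ) :=
    keyInt hF₁m hum hui hu01 hM0 hbd₁ hvan₁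
  have hint₂ : Integrable F₂ ((volume : Measure (Ed d)).prod μ) :=
    keyInt hF₂m hum hui hu01 hM0 hbd₂ hvan₂
  have hint₃ : Integrable F₃ ((volume : Measure (Ed d)).prod μ) :=
    keyInt hF₃m hum hui hu01 hM0 hbd₃ hvan₃
  -- pointwise-in-x integrability in z
  have hz : ∀ (F : Ed d × Ed d → ℝ), Measurable F → (∀ p, |F p| ≤ M) →
      ∀ x, Integrable (fun z => F (x, z)) μ := by
    intro F hFm hFb x
    refine (integrable_const M).mono' (hFm.comp measurable_prodMk_left).aestronglyMeasurable
      (Eventually.of_forall fun z => ?_)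
    simpa [Real.norm_eq_abs] using hFb (x, z)
  have hz₀ := hz F₀ hF₀m hbd₀
  have hz₁ := hz F₁ hF₁m hbd₁
  have hz₂ := hz F₂ hF₂m hbd₂
  have hz₃ := hz F₃ hF₃m hbd₃
  -- pointwise splitting of the inner integral
  have hsplit : ∀ x, (∫ z, F₀ (x, z) ∂μ)
      = (∫ z, F₁ (x, z) ∂μ) + (∫ z, F₂ (x, z) ∂μ) + (∫ z, F₃ (x, z) ∂μ) := by
    intro x
    have h12 : Integrable (fun z => F₁ (x, z) + F₂ (x, z)) μ := (hz₁ x).add (hz₂ x)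
    rw [← integral_add (hz₁ x) (hz₂ x), ← integral_add h12 (hz₃ x)]
    refine integral_congr_ae (Eventually.of_forall fun z => ?_)
    simp only [hF₀def, hF₁def, hF₂def, hF₃def]
    ring
  -- x-integrability of the inner integrals
  have hI₁ : Integrable (fun x => ∫ z, F₁ (x, z) ∂μ) volume := hint₁.integral_prod_left
  have hI₂ : Integrable (fun x => ∫ z, F₂ (x, z) ∂μ) volume := hint₂.integral_prod_left
  have hI₃ : Integrable (fun x => ∫ z, F₃ (x, z) ∂μ) volume := hint₃.integral_prod_left
  -- the antisymmetric term vanishes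
  have key3 : ∫ x, ∫ z, F₃ (x, z) ∂μ = 0 := by
    refine keyZero hsym hint₃ fun x z => ?_
    simp only [hF₃def]
    rw [add_neg_cancel_right]
    ring
  -- assemble
  have e0 : (∫ x, (1 / 2 : ℝ) * ∫ z, (φ (x + z) - φ x) * (ψ (x + z) * χ (x + z) - ψ x * χ x) ∂μ)
      = ∫ x, ((1 / 2 : ℝ) * ∫ z, F₁ (x, z) ∂μ + (1 / 2 : ℝ) * ∫ z, F₂ (x, z) ∂μ
          + (1 / 2 : ℝ) * ∫ z, F₃ (x, z) ∂μ) := by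
    refine integral_congr_ae (Eventually.of_forall fun x => ?_)
    dsimp only
    have h : (∫ z, (φ (x + z) - φ x) * (ψ (x + z) * χ (x + z) - ψ x * χ x) ∂μ)
        = ∫ z, F₀ (x, z) ∂μ := rfl
    rw [h, hsplit x]
    ring
  have e1 : (∫ x, (1 / 2 : ℝ) * ∫ z, F₁ (x, z) ∂μ)
      = ∫ x, ((1 / 2 : ℝ) * ∫ z, (φ (x + z) - φ x) * (ψ (x + z) - ψ x) ∂μ) * χ x := by
    refine integral_congr_ae (Eventually.of_forall fun x => ?_)
    dsimp only
    have h : (∫ z, F₁ (x, z) ∂μ)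
        = (∫ z, (φ (x + z) - φ x) * (ψ (x + z) - ψ x) ∂μ) * χ x :=
      integral_mul_const (χ x) _
    rw [h]; ring
  have e2 : (∫ x, (1 / 2 : ℝ) * ∫ z, F₂ (x, z) ∂μ)
      = ∫ x, ((1 / 2 : ℝ) * ∫ z, (φ (x + z) - φ x) * (χ (x + z) - χ x) ∂μ) * ψ x := by
    refine integral_congr_ae (Eventually.of_forall fun x => ?_)
    dsimp only
    have h : (∫ z, F₂ (x, z) ∂μ)
        = (∫ z, (φ (x + z) - φ x) * (χ (x + z) - χ x) ∂μ) * ψ x :=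
      integral_mul_const (ψ x) _
    rw [h]; ring
  have e3 : (∫ x, (1 / 2 : ℝ) * ∫ z, F₃ (x, z) ∂μ) = 0 := by
    rw [integral_const_mul, key3, mul_zero]
  have h12 : Integrable (fun x : Ed d => (1 / 2 : ℝ) * ∫ z, F₁ (x, z) ∂μ
      + (1 / 2 : ℝ) * ∫ z, F₂ (x, z) ∂μ) volume :=
    (hI₁.const_mul _).add (hI₂.const_mul _)
  rw [e0, integral_add h12 (hI₃.const_mul _),
    integral_add (hI₁.const_mul _) (hI₂.const_mul _), e1, e2, e3, add_zero]
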